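/- Let n ∈ ℕ, let X, Y be Hausdorff topological spaces, and let f : X → Y and g : Y → X be continuous maps with g ∘ f homotopic to the identity of X and f ∘ g homotopic to the identity of Y. If every continuous path [0,1] → w_n(X) is constant and every continuous path [0,1] → w_n(Y) is constant (i.e. both wild sets are totally path-disconnected), then w_n(X) and w_n(Y), with their subspace topologies, are homeomorphic. -/

import Mathlib

open Filter Topology

/-- The unit `n`-sphere in `ℝ^(n+1)`. -/
abbrev Sph (n : ℕ) : Type :=
  Metric.sphere (0 : EuclideanSpace ℝ (Fin (n + 1))) 1

/-- The basepoint `s₀ = (1,0,…,0)` of the unit `n`-sphere. -/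
noncomputable def spherePt (n : ℕ) : Sph n :=
  ⟨EuclideanSpace.single 0 1, by
    simp [mem_sphere_zero_iff_norm, EuclideanSpace.norm_single]⟩

/-- A continuous map `S^n → X` is essential if it is not homotopic to a constant map. -/
def Essential {n : ℕ} {X : Type*} [TopologicalSpace X] (f : C(Sph n, X)) : Prop :=
  ∀ x : X, ¬ f.Homotopic (ContinuousMap.const (Sph n) x)

/-- `x` is a `π_n`-wild point of `X` if there is a sequence of essential maps
`S^n → X` based at `x` converging to the constant map at `x` in the compact-open
topology. -/
def IsWildPoint (n : ℕ) {X : Type*} [TopologicalSpace X] (x : X) : Prop :=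
  ∃ f : ℕ → C(Sph n, X),
    (∀ k, f k (spherePt n) = x) ∧
    (∀ k, Essential (f k)) ∧
    Tendsto f atTop (𝓝 (ContinuousMap.const (Sph n) x))

/-- The `π_n`-wild set of `X`. -/
def wildSet (n : ℕ) (X : Type*) [TopologicalSpace X] : Set X :=
  {x | IsWildPoint n x}

/-- A continuous map is `π_n`-injective if precomposition reflects inessentiality. -/
def PiNInjective (n : ℕ) {X Y : Type*} [TopologicalSpace X] [TopologicalSpace Y]
    (f : C(X, Y)) : Prop :=
  ∀ g : C(Sph n, X),
    (∃ y : Y, (f.comp g).Homotopic (ContinuousMap.const (Sph n) y)) →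
    ∃ x : X, g.Homotopic (ContinuousMap.const (Sph n) x)

/-- `X` is `π_n`-rigid at `x`. -/
def IsRigidAt (n : ℕ) {X : Type*} [TopologicalSpace X] (x : X) : Prop :=
  ∃ f : ℕ → C(Sph n, X),
    (∀ k, f k (spherePt n) = x) ∧
    (∀ k, Essential (f k)) ∧
    Tendsto f atTop (𝓝 (ContinuousMap.const (Sph n) x)) ∧
    ∀ β : C(unitInterval, X), β 0 = x →
      ∀ H : ℕ → C(Sph n × unitInterval, X),
        (∀ k s, H k (s, 0) = f k s) →
        (∀ k t, H k (spherePt n, t) = β t) →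
        Tendsto H atTop (𝓝 (β.comp (ContinuousMap.snd (α := Sph n)))) →
        β 1 = x


lemma wild_map {X Y : Type*} [TopologicalSpace X] [TopologicalSpace Y] {n : ℕ}
    (f : C(X, Y)) (g : C(Y, X))
    (hgf : (g.comp f).Homotopic (ContinuousMap.id X))
    {x : X} (hx : IsWildPoint n x) : IsWildPoint n (f x) := by
  obtain ⟨u, h1, h2, h3⟩ := hx
  refine ⟨fun k => f.comp (u k), fun k => by simp [h1 k], fun k y hy => ?_, ?_⟩
  · have step1 : (g.comp (f.comp (u k))).Homotopic
        (g.comp (ContinuousMap.const (Sph n) y)) :=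
      ContinuousMap.Homotopic.comp (ContinuousMap.Homotopic.refl g) hy
    have step2 : ((g.comp f).comp (u k)).Homotopic
        ((ContinuousMap.id X).comp (u k)) :=
      ContinuousMap.Homotopic.comp hgf (ContinuousMap.Homotopic.refl (u k))
    rw [← ContinuousMap.comp_assoc] at step1
    rw [ContinuousMap.id_comp] at step2
    have : (u k).Homotopic (ContinuousMap.const (Sph n) (g y)) := by
      have := step2.symm.trans step1
      simpa using this
    exact h2 k (g y) this
  · have hc := (ContinuousMap.continuous_postcomp f).tendsto
      (ContinuousMap.const (Sph n) x)
    have := hc.comp h3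
    simpa [Function.comp_def] using this

lemma homotopic_id_fixes_wild {Z : Type*} [TopologicalSpace Z] {n : ℕ}
    (h : C(Z, Z)) (hh : h.Homotopic (ContinuousMap.id Z))
    (hpd : ∀ p : C(unitInterval, ↥(wildSet n Z)), ∀ t t' : unitInterval, p t = p t')
    (z : Z) (hz : IsWildPoint n z) : h z = z := by
  obtain ⟨H⟩ := hh
  set ht : unitInterval → C(Z, Z) := fun t =>
    ⟨fun w => H (t, w), H.continuous.comp (continuous_const.prodMk continuous_id)⟩ with hht
  have hslice : ∀ t, (ht t).Homotopic (ContinuousMap.id Z) := by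
    intro t
    refine ⟨⟨⟨fun p => H (max t p.1, p.2), ?_⟩, ?_, ?_⟩⟩
    · exact H.continuous.comp (((continuous_const.max continuous_fst)).prodMk continuous_snd)
    · intro w
      have : max t (0 : unitInterval) = t := max_eq_left (by exact t.2.1)
      simp [this, hht]
    · intro w
      have : max t (1 : unitInterval) = 1 := max_eq_right (by exact t.2.2)
      simp [this]
  have hwild : ∀ t : unitInterval, IsWildPoint n (H (t, z)) := by
    intro t
    have h2 : ((ht t).comp (ht t)).Homotopic (ContinuousMap.id Z) := by
      have := ContinuousMap.Homotopic.comp (hslice t) (hslice t)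
      rwa [ContinuousMap.id_comp] at this
    exact wild_map (ht t) (ht t) h2 hz
  set p : C(unitInterval, ↥(wildSet n Z)) :=
    ⟨fun t => ⟨H (t, z), hwild t⟩,
      Continuous.subtype_mk (H.continuous.comp (continuous_id.prodMk continuous_const)) _⟩
  have := congrArg Subtype.val (hpd p 0 1)
  simpa [p] using this

/-- homotopy equivalent spaces with totally path-disconnected wild
sets have homeomorphic wild sets. -/
theorem stmt12 {X Y : Type*} [TopologicalSpace X] [TopologicalSpace Y]
    [T2Space X] [T2Space Y] (n : ℕ) (f : C(X, Y)) (g : C(Y, X))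
    (hgf : (g.comp f).Homotopic (ContinuousMap.id X))
    (hfg : (f.comp g).Homotopic (ContinuousMap.id Y))
    (hX : ∀ p : C(unitInterval, ↥(wildSet n X)), ∀ t t' : unitInterval, p t = p t')
    (hY : ∀ p : C(unitInterval, ↥(wildSet n Y)), ∀ t t' : unitInterval, p t = p t') :
    Nonempty (↥(wildSet n X) ≃ₜ ↥(wildSet n Y)) := by
  refine ⟨{
    toFun := fun x => ⟨f x, wild_map f g hgf x.2⟩
    invFun := fun y => ⟨g y, wild_map g f hfg y.2⟩
    left_inv := fun x => Subtype.ext (homotopic_id_fixes_wild (g.comp f) hgf hX x x.2)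
    right_inv := fun y => Subtype.ext (homotopic_id_fixes_wild (f.comp g) hfg hY y y.2)
    continuous_toFun := Continuous.subtype_mk (f.continuous.comp continuous_subtype_val) _
    continuous_invFun := Continuous.subtype_mk (g.continuous.comp continuous_subtype_val) _ }⟩
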